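/- Let n ≥ 2 be an integer and define, for t > 0, φ_{2m}(t) = Σ_{j=0}^{m−1} C(m−1,j) (−1)^j (2j)! (1 − e^{−t} p_{2j}(t)) / t^{2j+1} for m ≥ 1, where C(m−1,j) is a binomial coefficient and p_k is the Taylor polynomial of e^t of order k centered at t = 0. Then for every t > 0, t·φ_{2n}'(t) + (2n−1)·φ_{2n}(t) = (2n−2)·φ_{2n−2}(t). -/

import Mathlib

open scoped Nat

/-- `taylorExp k t` is the Taylor polynomial of `e^t` of order `k` centered at `0`. -/
noncomputable def taylorExp (k : ℕ) (t : ℝ) : ℝ :=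
  ∑ i ∈ Finset.range (k + 1), t ^ i / (i ! : ℝ)

/-- The function `φ_{2m}` of the paper (for `m ≥ 1`). -/
noncomputable def phiEven (m : ℕ) (t : ℝ) : ℝ :=
  ∑ j ∈ Finset.range m,
    ((m - 1).choose j : ℝ) * (-1 : ℝ) ^ j * ((2*j)! : ℝ) *
      (1 - Real.exp (-t) * taylorExp (2*j) t) / t ^ (2*j + 1)

lemma taylor_hasDerivAt (k : ℕ) (t : ℝ) :
    HasDerivAt (fun s => taylorExp k s) (taylorExp k t - t ^ k / (k ! : ℝ)) t := by
  induction k with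
  | zero =>
      have : HasDerivAt (fun _ : ℝ => (1 : ℝ)) 0 t := hasDerivAt_const t 1
      have h : (fun s : ℝ => taylorExp 0 s) = fun _ : ℝ => (1 : ℝ) := by
        funext s; simp [taylorExp]
      rw [h]
      simpa [taylorExp] using this
  | succ k ih =>
      have hpow : HasDerivAt (fun s : ℝ => s ^ (k + 1) / ((k+1)! : ℝ))
          (((k : ℝ) + 1) * t ^ k / ((k+1)! : ℝ)) t := by
        have := (hasDerivAt_pow (k + 1) t).div_const ((k+1)! : ℝ)
        simpa using this
      have hsum := ih.add hpow
      have hfun : (fun s : ℝ => taylorExp k s + s ^ (k + 1) / ((k+1)! : ℝ))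
          = fun s => taylorExp (k + 1) s := by
        funext s; simp [taylorExp, Finset.sum_range_succ]
      simp only [Pi.add_def] at hsum
      rw [hfun] at hsum
      refine hsum.congr_deriv ?_
      have h1 : taylorExp (k+1) t = taylorExp k t + t ^ (k+1) / ((k+1)! : ℝ) := by
        simp [taylorExp, Finset.sum_range_succ]
      have h2 : ((k+1)! : ℝ) = ((k : ℝ) + 1) * (k ! : ℝ) := by
        push_cast [Nat.factorial_succ]; ring
      have hk : (k ! : ℝ) ≠ 0 := Nat.cast_ne_zero.2 (Nat.factorial_ne_zero k)
      have hk1 : ((k : ℝ) + 1) ≠ 0 := by positivity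
      rw [h1, h2]
      field_simp
      ring

lemma inner_hasDerivAt (j : ℕ) (t : ℝ) :
    HasDerivAt (fun s => 1 - Real.exp (-s) * taylorExp (2*j) s)
      (Real.exp (-t) * t ^ (2*j) / ((2*j)! : ℝ)) t := by
  have hexp : HasDerivAt (fun s : ℝ => Real.exp (-s)) (Real.exp (-t) * (-1)) t := by
    exact (hasDerivAt_neg t).exp
  have hmul := hexp.mul (taylor_hasDerivAt (2*j) t)
  have := hmul.const_sub 1
  refine this.congr_deriv ?_
  ring

lemma phi_term_hasDerivAt (c : ℝ) (j : ℕ) (t : ℝ) (ht : 0 < t) :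
    HasDerivAt
      (fun s => c * ((2*j)! : ℝ) * (1 - Real.exp (-s) * taylorExp (2*j) s) / s ^ (2*j + 1))
      ((c * ((2*j)! : ℝ) * (Real.exp (-t) * t ^ (2*j) / ((2*j)! : ℝ)) * t ^ (2*j + 1)
        - c * ((2*j)! : ℝ) * (1 - Real.exp (-t) * taylorExp (2*j) t)
            * ((2*j + 1 : ℕ) * t ^ (2*j)))
        / (t ^ (2*j + 1)) ^ 2) t := by
  have hN := (inner_hasDerivAt j t).const_mul (c * ((2*j)! : ℝ))
  have hd : HasDerivAt (fun s : ℝ => s ^ (2*j + 1)) ((2*j + 1 : ℕ) * t ^ (2*j)) t := by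
    simpa using hasDerivAt_pow (2*j + 1) t
  have hne : t ^ (2*j + 1) ≠ 0 := pow_ne_zero _ ht.ne'
  have := hN.div hd hne
  exact this

lemma phiEven_hasDerivAt (m : ℕ) (t : ℝ) (ht : 0 < t) :
    HasDerivAt (phiEven m)
      (∑ j ∈ Finset.range m,
        ((((m - 1).choose j : ℝ) * (-1 : ℝ) ^ j) * ((2*j)! : ℝ)
              * (Real.exp (-t) * t ^ (2*j) / ((2*j)! : ℝ)) * t ^ (2*j + 1)
          - (((m - 1).choose j : ℝ) * (-1 : ℝ) ^ j) * ((2*j)! : ℝ)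
              * (1 - Real.exp (-t) * taylorExp (2*j) t) * ((2*j + 1 : ℕ) * t ^ (2*j)))
        / (t ^ (2*j + 1)) ^ 2) t := by
  have : HasDerivAt (fun s => ∑ j ∈ Finset.range m,
      (((m - 1).choose j : ℝ) * (-1 : ℝ) ^ j) * ((2*j)! : ℝ)
        * (1 - Real.exp (-s) * taylorExp (2*j) s) / s ^ (2*j + 1)) _ t :=
    HasDerivAt.fun_sum (fun j _ =>
      phi_term_hasDerivAt (((m - 1).choose j : ℝ) * (-1 : ℝ) ^ j) j t ht)
  exact this

theorem stmt16 (n : ℕ) (hn : 2 ≤ n) :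
    ∀ t : ℝ, 0 < t →
      t * deriv (phiEven n) t + (2 * (n : ℝ) - 1) * phiEven n t
        = (2 * (n : ℝ) - 2) * phiEven (n - 1) t := by
  obtain ⟨m, rfl⟩ : ∃ m, n = m + 1 := ⟨n - 1, (Nat.succ_pred_eq_of_pos (by omega)).symm⟩
  have hm : 1 ≤ m := by omega
  intro t ht
  have hne : t ≠ 0 := ht.ne'
  rw [(phiEven_hasDerivAt (m+1) t ht).deriv]
  -- abbreviations
  set e := Real.exp (-t) with he
  -- LHS as a single sum
  rw [show phiEven (m+1) t = ∑ j ∈ Finset.range (m+1),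
      ((m).choose j : ℝ) * (-1 : ℝ) ^ j * ((2*j)! : ℝ)
        * (1 - e * taylorExp (2*j) t) / t ^ (2*j + 1) by
    simp [phiEven, he]]
  rw [Finset.mul_sum, Finset.mul_sum, ← Finset.sum_add_distrib]
  -- per-term simplification
  have key : ∀ j ∈ Finset.range (m+1),
      t * ((((((m+1) - 1).choose j : ℝ) * (-1 : ℝ) ^ j) * ((2*j)! : ℝ)
              * (e * t ^ (2*j) / ((2*j)! : ℝ)) * t ^ (2*j + 1)
          - ((((m+1) - 1).choose j : ℝ) * (-1 : ℝ) ^ j) * ((2*j)! : ℝ)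
              * (1 - e * taylorExp (2*j) t) * (((2*j + 1 : ℕ) : ℝ) * t ^ (2*j)))
          / (t ^ (2*j + 1)) ^ 2)
        + (2 * ((m + 1 : ℕ) : ℝ) - 1) *
          (((m).choose j : ℝ) * (-1 : ℝ) ^ j * ((2*j)! : ℝ)
            * (1 - e * taylorExp (2*j) t) / t ^ (2*j + 1))
      = ((m).choose j : ℝ) * (-1 : ℝ) ^ j * e
        + (2 * (m : ℝ) - 2 * (j : ℝ)) *
          (((m).choose j : ℝ) * (-1 : ℝ) ^ j * ((2*j)! : ℝ)
            * (1 - e * taylorExp (2*j) t) / t ^ (2*j + 1)) := by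
    intro j _
    have h1 : t ^ (2*j + 1) ≠ 0 := pow_ne_zero _ hne
    have h2 : ((2*j)! : ℝ) ≠ 0 := Nat.cast_ne_zero.2 (Nat.factorial_ne_zero _)
    simp only [Nat.add_sub_cancel]
    field_simp
    push_cast
    ring
  rw [Finset.sum_congr rfl key, Finset.sum_add_distrib]
  -- the alternating binomial sum vanishes
  have halt : ∑ j ∈ Finset.range (m+1), ((m).choose j : ℝ) * (-1 : ℝ) ^ j * e = 0 := by
    have h0 : ∑ j ∈ Finset.range (m+1), ((m).choose j : ℝ) * (-1 : ℝ) ^ j = 0 := by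
      have := Int.alternating_sum_range_choose (n := m)
      rw [if_neg (by omega)] at this
      have : ((∑ i ∈ Finset.range (m + 1), (-1 : ℤ) ^ i * (m.choose i : ℤ) : ℤ) : ℝ) = 0 := by
        rw [this]; norm_num
      push_cast at this
      rw [← this]
      apply Finset.sum_congr rfl
      intro j _; ring
    rw [← Finset.sum_mul, h0, zero_mul]
  rw [halt, zero_add]
  -- remaining sum: last term vanishes, then reindex binomials
  rw [Finset.sum_range_succ]
  have hlast : (2 * (m : ℝ) - 2 * (m : ℝ)) *
      (((m).choose m : ℝ) * (-1 : ℝ) ^ m * ((2*m)! : ℝ)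
        * (1 - e * taylorExp (2*m) t) / t ^ (2*m + 1)) = 0 := by
    ring_nf
  rw [hlast, add_zero]
  rw [show phiEven (m+1-1) t = ∑ j ∈ Finset.range m,
      ((m - 1).choose j : ℝ) * (-1 : ℝ) ^ j * ((2*j)! : ℝ)
        * (1 - e * taylorExp (2*j) t) / t ^ (2*j + 1) by
    simp [phiEven, he]]
  rw [Finset.mul_sum]
  apply Finset.sum_congr rfl
  intro j hj
  have hj' : j < m := Finset.mem_range.1 hj
  have hchoose : ((m).choose j : ℝ) * ((m : ℝ) - (j : ℝ)) = (m : ℝ) * ((m-1).choose j : ℝ) := by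
    have := Nat.choose_mul_succ_eq (m - 1) j
    rw [show m - 1 + 1 = m by omega] at this
    -- this : (m-1).choose j * m = m.choose j * (m - j)
    have hcast : ((((m-1).choose j) * m : ℕ) : ℝ) = (((m.choose j) * (m - j) : ℕ) : ℝ) := by
      exact_mod_cast congrArg (Nat.cast : ℕ → ℝ) this
    push_cast [Nat.cast_sub hj'.le] at hcast
    linarith
  have h2 : (2 * (m : ℝ) - 2 * (j : ℝ)) * ((m).choose j : ℝ)
      = (2 * ((m : ℝ) + 1) - 2) * ((m-1).choose j : ℝ) := by
    nlinarith [hchoose]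
  push_cast
  linear_combination ((-1 : ℝ) ^ j * ((2*j)! : ℝ)
    * (1 - e * taylorExp (2*j) t) / t ^ (2*j + 1)) * h2
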